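/- arXiv:2206.12750 — 3 statements merged into one kernel-verified Lean document; each statement's English description precedes it below -/
import Mathlib

section
/- Let ρ > 0 and λ > 0, and let (q^k)_{k≥0} ⊆ Q, (s^k)_{k≥0} ⊆ S, (d^k)_{k≥0} ⊆ D, (c^k)_{k≥0} ⊆ S, (b^k)_{k≥0} ⊆ D be sequences such that for every k ≥ 0: (i) q^{k+1} minimizes q ↦ ⟨c^{k+1} + ρ(s^{k+1} − s^k), F(q)⟩ + ⟨b^{k+1} + λ(d^{k+1} − d^k), Φ(q)⟩ over Q; (ii) s^{k+1} minimizes s ↦ H(s) − ⟨c^{k+1}, s⟩ over S; (iii) d^{k+1} minimizes d ↦ G(d) − ⟨b^{k+1}, d⟩ over D; (iv) c^{k+1} = c^k + ρ(F(q^{k+1}) − s^{k+1}) and b^{k+1} = b^k + λ(Φ(q^{k+1}) − d^{k+1}). Suppose there exists a saddle point (s*, d*, q*, b*, c*) of the Lagrangian L; in particular F(q*) = s* and Φ(q*) = d*. Then ‖F(q^k) − s^k‖ → 0 and ‖Φ(q^k) − d^k‖ → 0 as k → ∞, and H(s^k) + G(d^k) → H(s*) + G(d*) as k → ∞. (Theorem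 3.2 of the paper: convergence of the ADMM scheme for the nonlinear-equality constrained problem, which implies convergence of the split Bregman scheme.) -/
open scoped RealInnerProductSpace

lemma aux_inner {E : Type*} [NormedAddCommGroup E] [InnerProductSpace ℝ E] (x y : E) :
    2*⟪y, y - x⟫ = ‖y‖^2 - ‖x‖^2 + ‖y - x‖^2 := by
  have h := norm_sub_sq_real y (y - x)
  rw [sub_sub_cancel] at h
  linarith

lemma aux_step {E : Type*} [NormedAddCommGroup E] [InnerProductSpace ℝ E]
    {t : ℝ} (ht : 0 < t) (x y v : E) (h : y - x = t • v) :
    ⟪y, v⟫ = (‖y‖^2 - ‖x‖^2)/(2*t) + t/2*‖v‖^2 := by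
  have h1 := aux_inner x y
  rw [h, real_inner_smul_right, norm_smul, Real.norm_eq_abs, mul_pow, sq_abs] at h1
  have ht' : t ≠ 0 := ht.ne'
  field_simp
  linear_combination h1

lemma aux_step2 {E : Type*} [NormedAddCommGroup E] [InnerProductSpace ℝ E]
    (t : ℝ) (x y v : E) (h : y - x = t • v) :
    2*t*⟪y, v⟫ = ‖y‖^2 - ‖x‖^2 + t^2*‖v‖^2 := by
  have h1 := aux_inner x y
  rw [h, real_inner_smul_right, norm_smul, Real.norm_eq_abs, mul_pow, sq_abs] at h1
  linarith

lemma le_sqrt_of_sq_le {a R : ℝ} (ha : 0 ≤ a) (h : a^2 ≤ R) : a ≤ Real.sqrt R := by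
  have := Real.sqrt_le_sqrt h; rwa [Real.sqrt_sq ha] at this

lemma norm_vanish (E : ℕ → ℝ) (g : ℕ → ℝ) (t : ℝ) (ht : 0 < t)
    (hg : ∀ k, 0 ≤ g k)
    (hle : ∀ k, t * (g k)^2 ≤ E k - E (k+1))
    (hE : Filter.Tendsto (fun k => E k - E (k+1)) Filter.atTop (nhds 0)) :
    Filter.Tendsto g Filter.atTop (nhds 0) := by
  have h1 : Filter.Tendsto (fun k => t*(g k)^2) Filter.atTop (nhds 0) :=
    squeeze_zero (fun k => by positivity) hle hE
  have h2 : Filter.Tendsto (fun k => (g k)^2) Filter.atTop (nhds 0) := by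
    have h3 := h1.const_mul t⁻¹
    simp only [mul_zero] at h3
    convert h3 using 2 with k
    field_simp
  have h3 := h2.sqrt
  have h4 : (fun k => Real.sqrt ((g k)^2)) = g := funext fun k => Real.sqrt_sq (hg k)
  rwa [h4, Real.sqrt_zero] at h3

set_option maxHeartbeats 1000000 in
/-- Theorem 3.2 of the paper: convergence of the ADMM scheme for the
nonlinear-equality constrained problem. -/
theorem stmt_2
    {Q S D : Type*}
    [NormedAddCommGroup Q] [InnerProductSpace ℝ Q]
    [NormedAddCommGroup S] [InnerProductSpace ℝ S]
    [NormedAddCommGroup D] [InnerProductSpace ℝ D]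
    (F : Q → S) (Φ : Q → D) (H : S → ℝ) (G : D → ℝ)
    (L : S → D → Q → D → S → ℝ)
    (hL : ∀ s d q b c,
      L s d q b c = H s + G d + ⟪c, F q - s⟫ + ⟪b, Φ q - d⟫)
    (ρ lam : ℝ) (hρ : 0 < ρ) (hlam : 0 < lam)
    (q : ℕ → Q) (s : ℕ → S) (d : ℕ → D) (c : ℕ → S) (b : ℕ → D)
    (hq : ∀ (k : ℕ) (q' : Q),
      ⟪c (k+1) + ρ • (s (k+1) - s k), F (q (k+1))⟫
        + ⟪b (k+1) + lam • (d (k+1) - d k), Φ (q (k+1))⟫ ≤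
      ⟪c (k+1) + ρ • (s (k+1) - s k), F q'⟫
        + ⟪b (k+1) + lam • (d (k+1) - d k), Φ q'⟫)
    (hs : ∀ (k : ℕ) (s' : S),
      H (s (k+1)) - ⟪c (k+1), s (k+1)⟫ ≤ H s' - ⟪c (k+1), s'⟫)
    (hd : ∀ (k : ℕ) (d' : D),
      G (d (k+1)) - ⟪b (k+1), d (k+1)⟫ ≤ G d' - ⟪b (k+1), d'⟫)
    (hc : ∀ k : ℕ, c (k+1) = c k + ρ • (F (q (k+1)) - s (k+1)))
    (hb : ∀ k : ℕ, b (k+1) = b k + lam • (Φ (q (k+1)) - d (k+1)))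
    (sStar : S) (dStar : D) (qStar : Q) (bStar : D) (cStar : S)
    (hSaddle : ∀ (s' : S) (d' : D) (q' : Q) (b' : D) (c' : S),
      L sStar dStar qStar b' c' ≤ L sStar dStar qStar bStar cStar ∧
      L sStar dStar qStar bStar cStar ≤ L s' d' q' bStar cStar)
    (hFstar : F qStar = sStar) (hΦstar : Φ qStar = dStar) :
    Filter.Tendsto (fun k => ‖F (q k) - s k‖) Filter.atTop (nhds 0) ∧
    Filter.Tendsto (fun k => ‖Φ (q k) - d k‖) Filter.atTop (nhds 0) ∧
    Filter.Tendsto (fun k => H (s k) + G (d k)) Filter.atTop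
      (nhds (H sStar + G dStar)) := by
  have sad : ∀ (s' : S) (d' : D) (q' : Q),
      H sStar + G dStar ≤ H s' + G d' + ⟪cStar, F q' - s'⟫ + ⟪bStar, Φ q' - d'⟫ := by
    intro s' d' q'
    have h := (hSaddle s' d' q' bStar cStar).2
    rw [hL, hL, hFstar, hΦstar] at h
    simpa using h
  have key : ∀ k, ⟪c (k+1) - cStar, F (q (k+1)) - s (k+1)⟫
      + ⟪b (k+1) - bStar, Φ (q (k+1)) - d (k+1)⟫
      + ρ * ⟪s (k+1) - s k, F (q (k+1)) - sStar⟫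
      + lam * ⟪d (k+1) - d k, Φ (q (k+1)) - dStar⟫ ≤ 0 := by
    intro k
    have h1 := hq k qStar
    rw [hFstar, hΦstar] at h1
    have h2 := hs k sStar
    have h3 := hd k dStar
    have h4 := sad (s (k+1)) (d (k+1)) (q (k+1))
    simp only [inner_add_left, inner_sub_left, inner_sub_right, real_inner_smul_left]
      at h1 h2 h3 h4 ⊢
    linarith
  have mon_s : ∀ k, 0 ≤ ⟪F (q (k+2)) - s (k+2), s (k+2) - s (k+1)⟫ := by
    intro k
    have h1 := hs (k+1) (s (k+1))
    have h2 := hs k (s (k+2))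
    simp only [show k+1+1 = k+2 from rfl] at h1
    have h3 : 0 ≤ ⟪c (k+2) - c (k+1), s (k+2) - s (k+1)⟫ := by
      simp only [inner_sub_left, inner_sub_right]; linarith
    have hc2 := hc (k+1)
    simp only [show k+1+1 = k+2 from rfl] at hc2
    rw [hc2, add_sub_cancel_left, real_inner_smul_left] at h3
    nlinarith
  have mon_d : ∀ k, 0 ≤ ⟪Φ (q (k+2)) - d (k+2), d (k+2) - d (k+1)⟫ := by
    intro k
    have h1 := hd (k+1) (d (k+1))
    have h2 := hd k (d (k+2))
    simp only [show k+1+1 = k+2 from rfl] at h1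
    have h3 : 0 ≤ ⟪b (k+2) - b (k+1), d (k+2) - d (k+1)⟫ := by
      simp only [inner_sub_left, inner_sub_right]; linarith
    have hb2 := hb (k+1)
    simp only [show k+1+1 = k+2 from rfl] at hb2
    rw [hb2, add_sub_cancel_left, real_inner_smul_left] at h3
    nlinarith
  set E : ℕ → ℝ := fun k => lam*‖c k - cStar‖^2 + ρ*‖b k - bStar‖^2
      + ρ^2*lam*‖s k - sStar‖^2 + ρ*lam^2*‖d k - dStar‖^2 with hE
  have descent : ∀ k, E (k+2) + ρ^2*lam*‖F (q (k+2)) - s (k+2)‖^2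
      + ρ*lam^2*‖Φ (q (k+2)) - d (k+2)‖^2 + ρ^2*lam*‖s (k+2) - s (k+1)‖^2
      + ρ*lam^2*‖d (k+2) - d (k+1)‖^2 ≤ E (k+1) := by
    intro k
    have hkey := key (k+1)
    simp only [show k+1+1 = k+2 from rfl] at hkey
    have hkey2 := mul_le_mul_of_nonneg_left hkey
      (le_of_lt (by positivity : (0:ℝ) < 2*ρ*lam))
    rw [mul_zero] at hkey2
    have e1 : (c (k+2) - cStar) - (c (k+1) - cStar) = ρ • (F (q (k+2)) - s (k+2)) := by
      have hc2 := hc (k+1)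
      simp only [show k+1+1 = k+2 from rfl] at hc2
      rw [sub_sub_sub_cancel_right, hc2, add_sub_cancel_left]
    have t1 : 2*ρ*lam*⟪c (k+2) - cStar, F (q (k+2)) - s (k+2)⟫
        = lam*‖c (k+2) - cStar‖^2 - lam*‖c (k+1) - cStar‖^2
          + ρ^2*lam*‖F (q (k+2)) - s (k+2)‖^2 := by
      linear_combination lam * aux_step2 ρ (c (k+1) - cStar) (c (k+2) - cStar)
        (F (q (k+2)) - s (k+2)) e1
    have e2 : (b (k+2) - bStar) - (b (k+1) - bStar) = lam • (Φ (q (k+2)) - d (k+2)) := by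
      have hb2 := hb (k+1)
      simp only [show k+1+1 = k+2 from rfl] at hb2
      rw [sub_sub_sub_cancel_right, hb2, add_sub_cancel_left]
    have t2 : 2*ρ*lam*⟪b (k+2) - bStar, Φ (q (k+2)) - d (k+2)⟫
        = ρ*‖b (k+2) - bStar‖^2 - ρ*‖b (k+1) - bStar‖^2
          + ρ*lam^2*‖Φ (q (k+2)) - d (k+2)‖^2 := by
      linear_combination ρ * aux_step2 lam (b (k+1) - bStar) (b (k+2) - bStar)
        (Φ (q (k+2)) - d (k+2)) e2
    have e3 : (s (k+2) - sStar) - (s (k+1) - sStar) = (1:ℝ) • (s (k+2) - s (k+1)) := by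
      rw [one_smul]; abel
    have t3 : 2*ρ^2*lam*⟪s (k+2) - sStar, s (k+2) - s (k+1)⟫
        = ρ^2*lam*‖s (k+2) - sStar‖^2 - ρ^2*lam*‖s (k+1) - sStar‖^2
          + ρ^2*lam*‖s (k+2) - s (k+1)‖^2 := by
      have h5 := aux_step2 (1:ℝ) (s (k+1) - sStar) (s (k+2) - sStar)
        (s (k+2) - s (k+1)) e3
      linear_combination (ρ^2*lam) * h5
    have e4 : (d (k+2) - dStar) - (d (k+1) - dStar) = (1:ℝ) • (d (k+2) - d (k+1)) := by
      rw [one_smul]; abel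
    have t4 : 2*ρ*lam^2*⟪d (k+2) - dStar, d (k+2) - d (k+1)⟫
        = ρ*lam^2*‖d (k+2) - dStar‖^2 - ρ*lam^2*‖d (k+1) - dStar‖^2
          + ρ*lam^2*‖d (k+2) - d (k+1)‖^2 := by
      have h5 := aux_step2 (1:ℝ) (d (k+1) - dStar) (d (k+2) - dStar)
        (d (k+2) - d (k+1)) e4
      linear_combination (ρ*lam^2) * h5
    have split3 : ⟪s (k+2) - s (k+1), F (q (k+2)) - sStar⟫
        = ⟪s (k+2) - s (k+1), F (q (k+2)) - s (k+2)⟫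
          + ⟪s (k+2) - sStar, s (k+2) - s (k+1)⟫ := by
      have e5 : F (q (k+2)) - sStar = (F (q (k+2)) - s (k+2)) + (s (k+2) - sStar) := by abel
      rw [e5, inner_add_right, real_inner_comm (s (k+2) - sStar)]
    have split4 : ⟪d (k+2) - d (k+1), Φ (q (k+2)) - dStar⟫
        = ⟪d (k+2) - d (k+1), Φ (q (k+2)) - d (k+2)⟫
          + ⟪d (k+2) - dStar, d (k+2) - d (k+1)⟫ := by
      have e5 : Φ (q (k+2)) - dStar = (Φ (q (k+2)) - d (k+2)) + (d (k+2) - dStar) := by abel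
      rw [e5, inner_add_right, real_inner_comm (d (k+2) - dStar)]
    have m1 : 0 ≤ 2*ρ^2*lam*⟪s (k+2) - s (k+1), F (q (k+2)) - s (k+2)⟫ := by
      rw [real_inner_comm]; exact mul_nonneg (by positivity) (mon_s k)
    have m2 : 0 ≤ 2*ρ*lam^2*⟪d (k+2) - d (k+1), Φ (q (k+2)) - d (k+2)⟫ := by
      rw [real_inner_comm]; exact mul_nonneg (by positivity) (mon_d k)
    have s3 : 2*ρ^2*lam*⟪s (k+2) - s (k+1), F (q (k+2)) - sStar⟫
        = 2*ρ^2*lam*⟪s (k+2) - s (k+1), F (q (k+2)) - s (k+2)⟫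
          + 2*ρ^2*lam*⟪s (k+2) - sStar, s (k+2) - s (k+1)⟫ := by
      linear_combination (2*ρ^2*lam) * split3
    have s4 : 2*ρ*lam^2*⟪d (k+2) - d (k+1), Φ (q (k+2)) - dStar⟫
        = 2*ρ*lam^2*⟪d (k+2) - d (k+1), Φ (q (k+2)) - d (k+2)⟫
          + 2*ρ*lam^2*⟪d (k+2) - dStar, d (k+2) - d (k+1)⟫ := by
      linear_combination (2*ρ*lam^2) * split4
    simp only [hE]
    nlinarith [hkey2, t1, t2, t3, t4, s3, s4, m1, m2]
  have hEnn : ∀ k, 0 ≤ E k := by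
    intro k; simp only [hE]; positivity
  have nn1 : ∀ k, (0:ℝ) ≤ ρ^2*lam*‖F (q (k+2)) - s (k+2)‖^2 := fun k => by positivity
  have nn2 : ∀ k, (0:ℝ) ≤ ρ*lam^2*‖Φ (q (k+2)) - d (k+2)‖^2 := fun k => by positivity
  have nn3 : ∀ k, (0:ℝ) ≤ ρ^2*lam*‖s (k+2) - s (k+1)‖^2 := fun k => by positivity
  have nn4 : ∀ k, (0:ℝ) ≤ ρ*lam^2*‖d (k+2) - d (k+1)‖^2 := fun k => by positivity
  have hanti : Antitone (fun k => E (k+1)) := by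
    apply antitone_nat_of_succ_le
    intro k
    show E (k+1+1) ≤ E (k+1)
    simp only [show k+1+1 = k+2 from rfl]
    linarith [descent k, nn1 k, nn2 k, nn3 k, nn4 k]
  have hbdd : BddBelow (Set.range fun k => E (k+1)) := by
    refine ⟨0, ?_⟩; rintro x ⟨k, rfl⟩; exact hEnn (k+1)
  have hlim := tendsto_atTop_ciInf hanti hbdd
  have hlim2 : Filter.Tendsto (fun k => E (k+2)) Filter.atTop (nhds (⨅ k, E (k+1))) :=
    hlim.comp (Filter.tendsto_add_atTop_nat 1)
  have hdiff : Filter.Tendsto (fun k => E (k+1) - E (k+2)) Filter.atTop (nhds 0) := by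
    have h := hlim.sub hlim2
    simpa using h
  have hr2 : Filter.Tendsto (fun k => ‖F (q (k+2)) - s (k+2)‖) Filter.atTop (nhds 0) := by
    refine norm_vanish (fun k => E (k+1)) _ (ρ^2*lam) (by positivity)
      (fun k => norm_nonneg _) (fun k => ?_) hdiff
    linarith [descent k, nn2 k, nn3 k, nn4 k]
  have hp2 : Filter.Tendsto (fun k => ‖Φ (q (k+2)) - d (k+2)‖) Filter.atTop (nhds 0) := by
    refine norm_vanish (fun k => E (k+1)) _ (ρ*lam^2) (by positivity)
      (fun k => norm_nonneg _) (fun k => ?_) hdiff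
    linarith [descent k, nn1 k, nn3 k, nn4 k]
  have hds2 : Filter.Tendsto (fun k => ‖s (k+2) - s (k+1)‖) Filter.atTop (nhds 0) := by
    refine norm_vanish (fun k => E (k+1)) _ (ρ^2*lam) (by positivity)
      (fun k => norm_nonneg _) (fun k => ?_) hdiff
    linarith [descent k, nn1 k, nn2 k, nn4 k]
  have hdd2 : Filter.Tendsto (fun k => ‖d (k+2) - d (k+1)‖) Filter.atTop (nhds 0) := by
    refine norm_vanish (fun k => E (k+1)) _ (ρ*lam^2) (by positivity)
      (fun k => norm_nonneg _) (fun k => ?_) hdiff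
    linarith [descent k, nn1 k, nn2 k, nn3 k]
  have hrlim : Filter.Tendsto (fun k => ‖F (q k) - s k‖) Filter.atTop (nhds 0) :=
    (Filter.tendsto_add_atTop_iff_nat 2).1 hr2
  have hplim : Filter.Tendsto (fun k => ‖Φ (q k) - d k‖) Filter.atTop (nhds 0) :=
    (Filter.tendsto_add_atTop_iff_nat 2).1 hp2
  refine ⟨hrlim, hplim, ?_⟩
  -- bounds from decreasing energy
  have hEb : ∀ k, E (k+1) ≤ E 1 := fun k => hanti (Nat.zero_le k)
  have hcb : ∀ k, ‖c (k+2)‖ ≤ ‖cStar‖ + Real.sqrt (E 1 / lam) := by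
    intro k
    have h1 : lam * ‖c (k+2) - cStar‖^2 ≤ E (k+2) := by
      simp only [hE]
      have h2 : (0:ℝ) ≤ ρ*‖b (k+2) - bStar‖^2 := by positivity
      have h3 : (0:ℝ) ≤ ρ^2*lam*‖s (k+2) - sStar‖^2 := by positivity
      have h4 : (0:ℝ) ≤ ρ*lam^2*‖d (k+2) - dStar‖^2 := by positivity
      linarith
    have h2 : ‖c (k+2) - cStar‖^2 ≤ E 1 / lam := by
      rw [le_div_iff₀ hlam]
      have := hEb (k+1)
      nlinarith
    have h3 := le_sqrt_of_sq_le (norm_nonneg _) h2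
    calc ‖c (k+2)‖ = ‖(c (k+2) - cStar) + cStar‖ := by rw [sub_add_cancel]
      _ ≤ ‖c (k+2) - cStar‖ + ‖cStar‖ := norm_add_le _ _
      _ ≤ ‖cStar‖ + Real.sqrt (E 1 / lam) := by linarith
  have hbb : ∀ k, ‖b (k+2)‖ ≤ ‖bStar‖ + Real.sqrt (E 1 / ρ) := by
    intro k
    have h1 : ρ * ‖b (k+2) - bStar‖^2 ≤ E (k+2) := by
      simp only [hE]
      have h2 : (0:ℝ) ≤ lam*‖c (k+2) - cStar‖^2 := by positivity
      have h3 : (0:ℝ) ≤ ρ^2*lam*‖s (k+2) - sStar‖^2 := by positivity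
      have h4 : (0:ℝ) ≤ ρ*lam^2*‖d (k+2) - dStar‖^2 := by positivity
      linarith
    have h2 : ‖b (k+2) - bStar‖^2 ≤ E 1 / ρ := by
      rw [le_div_iff₀ hρ]
      have := hEb (k+1)
      nlinarith
    have h3 := le_sqrt_of_sq_le (norm_nonneg _) h2
    calc ‖b (k+2)‖ = ‖(b (k+2) - bStar) + bStar‖ := by rw [sub_add_cancel]
      _ ≤ ‖b (k+2) - bStar‖ + ‖bStar‖ := norm_add_le _ _
      _ ≤ ‖bStar‖ + Real.sqrt (E 1 / ρ) := by linarith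
  have hFb : ∀ k, ‖F (q (k+2)) - sStar‖ ≤ 2 * Real.sqrt (E 1 / (ρ^2*lam)) := by
    intro k
    have hr : ρ^2*lam*‖F (q (k+2)) - s (k+2)‖^2 ≤ E 1 := by
      linarith [descent k, nn2 k, nn3 k, nn4 k, hEb k, hEnn (k+2)]
    have hr' : ‖F (q (k+2)) - s (k+2)‖^2 ≤ E 1 / (ρ^2*lam) := by
      rw [le_div_iff₀ (by positivity)]
      nlinarith
    have hse : ρ^2*lam*‖s (k+2) - sStar‖^2 ≤ E 1 := by
      have h1 : ρ^2*lam*‖s (k+2) - sStar‖^2 ≤ E (k+2) := by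
        simp only [hE]
        have h2 : (0:ℝ) ≤ lam*‖c (k+2) - cStar‖^2 := by positivity
        have h3 : (0:ℝ) ≤ ρ*‖b (k+2) - bStar‖^2 := by positivity
        have h4 : (0:ℝ) ≤ ρ*lam^2*‖d (k+2) - dStar‖^2 := by positivity
        linarith
      linarith [hEb (k+1)]
    have hse' : ‖s (k+2) - sStar‖^2 ≤ E 1 / (ρ^2*lam) := by
      rw [le_div_iff₀ (by positivity)]
      nlinarith
    have i1 := le_sqrt_of_sq_le (norm_nonneg _) hr'
    have i2 := le_sqrt_of_sq_le (norm_nonneg _) hse'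
    calc ‖F (q (k+2)) - sStar‖
        = ‖(F (q (k+2)) - s (k+2)) + (s (k+2) - sStar)‖ := by rw [sub_add_sub_cancel]
      _ ≤ ‖F (q (k+2)) - s (k+2)‖ + ‖s (k+2) - sStar‖ := norm_add_le _ _
      _ ≤ 2 * Real.sqrt (E 1 / (ρ^2*lam)) := by linarith
  have hΦb : ∀ k, ‖Φ (q (k+2)) - dStar‖ ≤ 2 * Real.sqrt (E 1 / (ρ*lam^2)) := by
    intro k
    have hr : ρ*lam^2*‖Φ (q (k+2)) - d (k+2)‖^2 ≤ E 1 := by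
      linarith [descent k, nn1 k, nn3 k, nn4 k, hEb k, hEnn (k+2)]
    have hr' : ‖Φ (q (k+2)) - d (k+2)‖^2 ≤ E 1 / (ρ*lam^2) := by
      rw [le_div_iff₀ (by positivity)]
      nlinarith
    have hde : ρ*lam^2*‖d (k+2) - dStar‖^2 ≤ E 1 := by
      have h1 : ρ*lam^2*‖d (k+2) - dStar‖^2 ≤ E (k+2) := by
        simp only [hE]
        have h2 : (0:ℝ) ≤ lam*‖c (k+2) - cStar‖^2 := by positivity
        have h3 : (0:ℝ) ≤ ρ*‖b (k+2) - bStar‖^2 := by positivity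
        have h4 : (0:ℝ) ≤ ρ^2*lam*‖s (k+2) - sStar‖^2 := by positivity
        linarith
      linarith [hEb (k+1)]
    have hde' : ‖d (k+2) - dStar‖^2 ≤ E 1 / (ρ*lam^2) := by
      rw [le_div_iff₀ (by positivity)]
      nlinarith
    have i1 := le_sqrt_of_sq_le (norm_nonneg _) hr'
    have i2 := le_sqrt_of_sq_le (norm_nonneg _) hde'
    calc ‖Φ (q (k+2)) - dStar‖
        = ‖(Φ (q (k+2)) - d (k+2)) + (d (k+2) - dStar)‖ := by rw [sub_add_sub_cancel]
      _ ≤ ‖Φ (q (k+2)) - d (k+2)‖ + ‖d (k+2) - dStar‖ := norm_add_le _ _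
      _ ≤ 2 * Real.sqrt (E 1 / (ρ*lam^2)) := by linarith
  -- upper bound on objective
  have hupper : ∀ k, H (s (k+2)) + G (d (k+2)) ≤ (H sStar + G dStar
      + (- ⟪c (k+2), F (q (k+2)) - s (k+2)⟫ - ⟪b (k+2), Φ (q (k+2)) - d (k+2)⟫
         - ρ * ⟪s (k+2) - s (k+1), F (q (k+2)) - sStar⟫
         - lam * ⟪d (k+2) - d (k+1), Φ (q (k+2)) - dStar⟫)) := by
    intro k
    have h1 := hq (k+1) qStar
    rw [hFstar, hΦstar] at h1
    have h2 := hs (k+1) sStar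
    have h3 := hd (k+1) dStar
    simp only [show k+1+1 = k+2 from rfl] at h1 h2 h3
    simp only [inner_add_left, inner_sub_left, inner_sub_right, real_inner_smul_left]
      at h1 h2 h3 ⊢
    linarith
  -- lower bound on objective
  have hlower : ∀ k, (H sStar + G dStar - ⟪cStar, F (q (k+2)) - s (k+2)⟫
      - ⟪bStar, Φ (q (k+2)) - d (k+2)⟫) ≤ H (s (k+2)) + G (d (k+2)) := by
    intro k
    have h := sad (s (k+2)) (d (k+2)) (q (k+2))
    linarith
  -- limits of the correction terms
  have u1 : Filter.Tendsto (fun k => ⟪c (k+2), F (q (k+2)) - s (k+2)⟫)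
      Filter.atTop (nhds 0) := by
    apply squeeze_zero_norm
      (a := fun k => (‖cStar‖ + Real.sqrt (E 1 / lam)) * ‖F (q (k+2)) - s (k+2)‖)
    · intro k
      rw [Real.norm_eq_abs]
      refine (abs_real_inner_le_norm _ _).trans ?_
      exact mul_le_mul_of_nonneg_right (hcb k) (norm_nonneg _)
    · have h := hr2.const_mul (‖cStar‖ + Real.sqrt (E 1 / lam))
      simpa using h
  have u2 : Filter.Tendsto (fun k => ⟪b (k+2), Φ (q (k+2)) - d (k+2)⟫)
      Filter.atTop (nhds 0) := by
    apply squeeze_zero_norm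
      (a := fun k => (‖bStar‖ + Real.sqrt (E 1 / ρ)) * ‖Φ (q (k+2)) - d (k+2)‖)
    · intro k
      rw [Real.norm_eq_abs]
      refine (abs_real_inner_le_norm _ _).trans ?_
      exact mul_le_mul_of_nonneg_right (hbb k) (norm_nonneg _)
    · have h := hp2.const_mul (‖bStar‖ + Real.sqrt (E 1 / ρ))
      simpa using h
  have u3 : Filter.Tendsto (fun k => ρ * ⟪s (k+2) - s (k+1), F (q (k+2)) - sStar⟫)
      Filter.atTop (nhds 0) := by
    apply squeeze_zero_norm
      (a := fun k => (ρ * (2 * Real.sqrt (E 1 / (ρ^2*lam)))) * ‖s (k+2) - s (k+1)‖)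
    · intro k
      rw [Real.norm_eq_abs, abs_mul, abs_of_pos hρ]
      have hi := abs_real_inner_le_norm (s (k+2) - s (k+1)) (F (q (k+2)) - sStar)
      have h2 : |⟪s (k+2) - s (k+1), F (q (k+2)) - sStar⟫|
          ≤ ‖s (k+2) - s (k+1)‖ * (2 * Real.sqrt (E 1 / (ρ^2*lam))) :=
        hi.trans (mul_le_mul_of_nonneg_left (hFb k) (norm_nonneg _))
      have h3 := mul_le_mul_of_nonneg_left h2 hρ.le
      linarith [h3]
    · have h := hds2.const_mul (ρ * (2 * Real.sqrt (E 1 / (ρ^2*lam))))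
      simpa using h
  have u4 : Filter.Tendsto (fun k => lam * ⟪d (k+2) - d (k+1), Φ (q (k+2)) - dStar⟫)
      Filter.atTop (nhds 0) := by
    apply squeeze_zero_norm
      (a := fun k => (lam * (2 * Real.sqrt (E 1 / (ρ*lam^2)))) * ‖d (k+2) - d (k+1)‖)
    · intro k
      rw [Real.norm_eq_abs, abs_mul, abs_of_pos hlam]
      have hi := abs_real_inner_le_norm (d (k+2) - d (k+1)) (Φ (q (k+2)) - dStar)
      have h2 : |⟪d (k+2) - d (k+1), Φ (q (k+2)) - dStar⟫|
          ≤ ‖d (k+2) - d (k+1)‖ * (2 * Real.sqrt (E 1 / (ρ*lam^2))) :=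
        hi.trans (mul_le_mul_of_nonneg_left (hΦb k) (norm_nonneg _))
      have h3 := mul_le_mul_of_nonneg_left h2 hlam.le
      linarith [h3]
    · have h := hdd2.const_mul (lam * (2 * Real.sqrt (E 1 / (ρ*lam^2))))
      simpa using h
  have l1 : Filter.Tendsto (fun k => ⟪cStar, F (q (k+2)) - s (k+2)⟫)
      Filter.atTop (nhds 0) := by
    apply squeeze_zero_norm (a := fun k => ‖cStar‖ * ‖F (q (k+2)) - s (k+2)‖)
    · intro k
      rw [Real.norm_eq_abs]
      exact abs_real_inner_le_norm _ _
    · have h := hr2.const_mul ‖cStar‖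
      simpa using h
  have l2 : Filter.Tendsto (fun k => ⟪bStar, Φ (q (k+2)) - d (k+2)⟫)
      Filter.atTop (nhds 0) := by
    apply squeeze_zero_norm (a := fun k => ‖bStar‖ * ‖Φ (q (k+2)) - d (k+2)‖)
    · intro k
      rw [Real.norm_eq_abs]
      exact abs_real_inner_le_norm _ _
    · have h := hp2.const_mul ‖bStar‖
      simpa using h
  have hUp : Filter.Tendsto (fun k => H sStar + G dStar
      + (- ⟪c (k+2), F (q (k+2)) - s (k+2)⟫ - ⟪b (k+2), Φ (q (k+2)) - d (k+2)⟫
         - ρ * ⟪s (k+2) - s (k+1), F (q (k+2)) - sStar⟫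
         - lam * ⟪d (k+2) - d (k+1), Φ (q (k+2)) - dStar⟫))
      Filter.atTop (nhds (H sStar + G dStar)) := by
    have h := (tendsto_const_nhds (x := H sStar + G dStar)
      (f := Filter.atTop (α := ℕ))).add (((u1.neg.sub u2).sub u3).sub u4)
    simpa using h
  have hLow : Filter.Tendsto (fun k => H sStar + G dStar
      - ⟪cStar, F (q (k+2)) - s (k+2)⟫ - ⟪bStar, Φ (q (k+2)) - d (k+2)⟫)
      Filter.atTop (nhds (H sStar + G dStar)) := by
    have h := ((tendsto_const_nhds (x := H sStar + G dStar)
      (f := Filter.atTop (α := ℕ))).sub l1).sub l2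
    simpa using h
  have hHG2 : Filter.Tendsto (fun k => H (s (k+2)) + G (d (k+2)))
      Filter.atTop (nhds (H sStar + G dStar)) :=
    tendsto_of_tendsto_of_tendsto_of_le_of_le hLow hUp hlower hupper
  exact (Filter.tendsto_add_atTop_iff_nat 2).1 hHG2
end

section
/- Let μ > 0 and ρ > 0, let z ∈ V, and let (s^k)_{k≥0}, (c^k)_{k≥0}, (w^k)_{k≥1} be sequences in V satisfying, for every k ≥ 0, s^{k+1} = (μ/(μ+ρ)) z + (ρ/(μ+ρ)) (w^{k+1} + c^k) and c^{k+1} = c^k + (w^{k+1} − s^{k+1}). If s^0 − (ρ/μ) c^0 = z, then s^k − (ρ/μ) c^k = z for every k ≥ 0. (Identity (2.18) of the paper, where w^{k+1} = F(q^{k+1}); it shows the simplified ADMM scheme reduces to the split Bregman scheme.) -/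
/-- Identity (2.18) of the paper: the invariant `s^k - (ρ/μ) c^k = z` is preserved
by the simplified ADMM updates, where `w^{k+1} = F(q^{k+1})`. -/
theorem stmt_4 {V : Type*} [AddCommGroup V] [Module ℝ V]
    (μ ρ : ℝ) (hμ : 0 < μ) (hρ : 0 < ρ) (z : V)
    (s c w : ℕ → V)
    (hs : ∀ k : ℕ,
      s (k+1) = (μ/(μ+ρ)) • z + (ρ/(μ+ρ)) • (w (k+1) + c k))
    (hc : ∀ k : ℕ, c (k+1) = c k + (w (k+1) - s (k+1)))
    (h0 : s 0 - (ρ/μ) • c 0 = z) :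
    ∀ k : ℕ, s k - (ρ/μ) • c k = z := by
  intro k
  cases k with
  | zero => exact h0
  | succ n =>
    have hμρ : μ + ρ ≠ 0 := by positivity
    have hμ' : μ ≠ 0 := ne_of_gt hμ
    rw [hc n, hs n]
    match_scalars <;> field_simp <;> ring
end

section
/- Let X and Y be real normed spaces, let F : X → Y be Lipschitz continuous on a neighborhood of q ∈ X, and let J : Y → ℝ be Fréchet differentiable at s = F(q) with derivative J'(s) ∈ Y*. Define the scalar function ⟨J'(s), F⟩ : X → ℝ by p ↦ J'(s)(F(p)). Then the Fréchet subdifferentials coincide: ∂(J ∘ F)(q) = ∂⟨J'(s), F⟩(q); i.e., a continuous linear functional q* belongs to ∂(J ∘ F)(q) if and only if it belongs to ∂⟨J'(s), F⟩(q). (Lemma 4.2 of the paper, the chain rule for Fréchet subdifferentials, with the local Lipschitz hypothesis on F making it precise.) -/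
open Filter Topology

/-- The Fréchet subdifferential of a functional `I : X → ℝ` at `q`: the set of
continuous linear functionals `f` with
`liminf_{p→q, p≠q} (I(p) - I(q) - f(p-q))/‖p-q‖ ≥ 0`
(the liminf is taken in `EReal` so that it is always well defined). -/
def frechetSubdiff {X : Type*} [NormedAddCommGroup X] [NormedSpace ℝ X]
    (I : X → ℝ) (q : X) : Set (X →L[ℝ] ℝ) :=
  {f | 0 ≤ Filter.liminf
    (fun p => (((I p - I q - f (p - q)) / ‖p - q‖ : ℝ) : EReal)) (𝓝[≠] q)}

lemma aux_liminf {α : Type*} {l : Filter α} {u v : α → ℝ}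
    (h : Filter.Tendsto (fun p => v p - u p) l (𝓝 0))
    (hu : 0 ≤ Filter.liminf (fun p => ((u p : EReal))) l) :
    0 ≤ Filter.liminf (fun p => ((v p : EReal))) l := by
  rw [Filter.le_liminf_iff] at hu ⊢
  intro b hb
  induction b using EReal.rec with
  | bot => filter_upwards with p; exact EReal.bot_lt_coe _
  | top => exact absurd hb (by simp)
  | coe c =>
    have hc : c < 0 := by exact_mod_cast hb
    have h1 : ∀ᶠ p in l, ((c / 2 : ℝ) : EReal) < (u p : EReal) :=
      hu _ (by exact_mod_cast (by linarith : (c / 2 : ℝ) < 0))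
    have h2 : ∀ᶠ p in l, |v p - u p| < -c / 2 := by
      have := Metric.tendsto_nhds.mp h (-c / 2) (by linarith)
      simpa [Real.dist_eq] using this
    filter_upwards [h1, h2] with p hp1 hp2
    have hp1' : c / 2 < u p := by exact_mod_cast hp1
    have : c < v p := by
      have := abs_lt.mp hp2
      linarith [this.1]
    exact_mod_cast this

/-- Lemma 4.2 of the paper (chain rule for Fréchet subdifferentials): if `F` is
Lipschitz on a neighborhood of `q` and `J` is Fréchet differentiable at `s = F(q)`
with derivative `J'(s)`, then `∂(J ∘ F)(q) = ∂⟨J'(s), F⟩(q)`. -/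
theorem stmt_9 {X Y : Type*}
    [NormedAddCommGroup X] [NormedSpace ℝ X]
    [NormedAddCommGroup Y] [NormedSpace ℝ Y]
    (F : X → Y) (q : X) (K : NNReal) (U : Set X) (hU : U ∈ 𝓝 q)
    (hF : LipschitzOnWith K F U)
    (J : Y → ℝ) (J' : Y →L[ℝ] ℝ) (hJ : HasFDerivAt J J' (F q)) :
    ∀ qs : X →L[ℝ] ℝ,
      qs ∈ frechetSubdiff (fun p => J (F p)) q ↔
      qs ∈ frechetSubdiff (fun p => J' (F p)) q := by
  -- the error term tends to zero
  have hFc : ContinuousAt F q := (hF.continuousOn).continuousAt hU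
  have hlo := hJ.isLittleO.comp_tendsto hFc
  have hO : (fun p => F p - F q) =O[𝓝 q] fun p => p - q := by
    rw [Asymptotics.isBigO_iff]
    refine ⟨K, ?_⟩
    filter_upwards [hU] with p hp
    have := hF.dist_le_mul p hp q (mem_of_mem_nhds hU)
    simpa [dist_eq_norm] using this
  have h0 : Filter.Tendsto
      (fun p => (J (F p) - J (F q) - J' (F p - F q)) / ‖p - q‖) (𝓝[≠] q) (𝓝 0) := by
    have := ((hlo.trans_isBigO hO).norm_right).tendsto_div_nhds_zero
    exact this.mono_left nhdsWithin_le_nhds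
  intro qs
  set u : X → ℝ := fun p => (J' (F p) - J' (F q) - qs (p - q)) / ‖p - q‖ with hu
  set v : X → ℝ := fun p => (J (F p) - J (F q) - qs (p - q)) / ‖p - q‖ with hv
  have key : ∀ p, v p - u p = (J (F p) - J (F q) - J' (F p - F q)) / ‖p - q‖ := by
    intro p
    simp only [hu, hv, div_sub_div_same, map_sub]
    ring_nf
  have hvu : Filter.Tendsto (fun p => v p - u p) (𝓝[≠] q) (𝓝 0) :=
    h0.congr fun p => (key p).symm
  have huv : Filter.Tendsto (fun p => u p - v p) (𝓝[≠] q) (𝓝 0) := by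
    have := hvu.neg
    simpa [neg_sub] using this
  exact ⟨fun h => aux_liminf huv h, fun h => aux_liminf hvu h⟩
end
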